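/- Let Y be a closed subspace of a Banach space X. If for every nonempty closed bounded F ⊆ X and every ε > 0 there exists δ > 0 with cent_{B_Y}(F,δ) ⊆ cent_{B_Y}(F) + εB_X (i.e., (X, B_Y, CB(X)) has property-(P₁)), then the same holds with Y in place of B_Y: for every nonempty closed bounded F ⊆ X and ε > 0 there is δ > 0 with cent_Y(F,δ) ⊆ cent_Y(F) + εB_X. -/

import Mathlib

open Metric Set Pointwise

/-- `r(x,B) = sup_{b ∈ B} ‖x - b‖`. -/
noncomputable def chebR {X : Type*} [NormedAddCommGroup X] (x : X) (B : Set X) : ℝ :=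
  ⨆ b : B, ‖x - (b : X)‖

/-- `rad_V(B) = inf_{v ∈ V} r(v,B)`, the restricted Chebyshev radius. -/
noncomputable def chebRad {X : Type*} [NormedAddCommGroup X] (V B : Set X) : ℝ :=
  ⨅ v : V, chebR (v : X) B

/-- `cent_V(B)`, the set of restricted Chebyshev centers of `B` w.r.t. `V`. -/
noncomputable def chebCent {X : Type*} [NormedAddCommGroup X] (V B : Set X) : Set X :=
  {v ∈ V | chebR v B ≤ chebRad V B}

/-- `cent_V(B,δ) = {v ∈ V : r(v,B) ≤ rad_V(B) + δ}`. -/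
noncomputable def chebCentA {X : Type*} [NormedAddCommGroup X] (V B : Set X) (δ : ℝ) : Set X :=
  {v ∈ V | chebR v B ≤ chebRad V B + δ}

/-- Property-(P₁) of `(X,V,{F})`: nonemptiness of `cent_V(F)` together with the ε-δ containment. -/
def propP1 {X : Type*} [NormedAddCommGroup X] [NormedSpace ℝ X] (V F : Set X) : Prop :=
  (chebCent V F).Nonempty ∧
    ∀ ε > (0 : ℝ), ∃ δ > (0 : ℝ), chebCentA V F δ ⊆ chebCent V F + ε • closedBall (0 : X) 1

section Aux

variable {X : Type*} [NormedAddCommGroup X] [NormedSpace ℝ X]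

lemma chebR_bddAbove {F : Set X} (hFb : Bornology.IsBounded F) (x : X) :
    BddAbove (Set.range fun b : F => ‖x - (b : X)‖) := by
  obtain ⟨C, hC⟩ := hFb.exists_norm_le
  refine ⟨‖x‖ + C, ?_⟩
  rintro r ⟨b, rfl⟩
  calc ‖x - (b : X)‖ ≤ ‖x‖ + ‖(b : X)‖ := norm_sub_le _ _
    _ ≤ ‖x‖ + C := by have := hC b b.2; linarith

lemma norm_sub_le_chebR {F : Set X} (hFb : Bornology.IsBounded F) {b : X} (hb : b ∈ F) (x : X) :
    ‖x - b‖ ≤ chebR x F :=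
  le_ciSup (chebR_bddAbove hFb x) ⟨b, hb⟩

lemma chebR_le {F : Set X} (hFne : F.Nonempty) {x : X} {r : ℝ}
    (h : ∀ b ∈ F, ‖x - b‖ ≤ r) : chebR x F ≤ r := by
  have : Nonempty F := hFne.to_subtype
  exact ciSup_le fun b => h b b.2

lemma chebR_nonneg {F : Set X} (hFne : F.Nonempty) (hFb : Bornology.IsBounded F) (x : X) :
    0 ≤ chebR x F := by
  obtain ⟨b, hb⟩ := hFne
  exact le_trans (norm_nonneg _) (norm_sub_le_chebR hFb hb x)

lemma chebR_smul {F : Set X} (hFne : F.Nonempty) (hFb : Bornology.IsBounded F)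
    {c : ℝ} (hc : 0 < c) (x : X) : chebR (c • x) (c • F) = c * chebR x F := by
  refine le_antisymm ?_ ?_
  · refine chebR_le (hFne.smul_set) fun b hb => ?_
    obtain ⟨b', hb', rfl⟩ := hb
    rw [← smul_sub, norm_smul, Real.norm_eq_abs, abs_of_pos hc]
    exact mul_le_mul_of_nonneg_left (norm_sub_le_chebR hFb hb' x) hc.le
  · rw [mul_comm, ← le_div_iff₀ hc]
    refine chebR_le hFne fun b hb => ?_
    rw [le_div_iff₀ hc, mul_comm]
    have : c * ‖x - b‖ = ‖c • x - c • b‖ := by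
      rw [← smul_sub, norm_smul, Real.norm_eq_abs, abs_of_pos hc]
    rw [this]
    exact norm_sub_le_chebR (hFb.smul₀ c) (smul_mem_smul_set hb) _

lemma chebRad_bddBelow {V F : Set X} (hFne : F.Nonempty) (hFb : Bornology.IsBounded F) :
    BddBelow (Set.range fun v : V => chebR (v : X) F) := by
  refine ⟨0, ?_⟩
  rintro r ⟨v, rfl⟩
  exact chebR_nonneg hFne hFb _

lemma chebRad_le {V F : Set X} (hFne : F.Nonempty) (hFb : Bornology.IsBounded F)
    {v : X} (hv : v ∈ V) : chebRad V F ≤ chebR v F :=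
  ciInf_le (chebRad_bddBelow hFne hFb) ⟨v, hv⟩

lemma le_chebRad {V F : Set X} (hVne : V.Nonempty) {r : ℝ}
    (h : ∀ v ∈ V, r ≤ chebR v F) : r ≤ chebRad V F := by
  have : Nonempty V := hVne.to_subtype
  exact le_ciInf fun v => h v v.2

lemma chebRad_nonneg {V F : Set X} (hVne : V.Nonempty) (hFne : F.Nonempty)
    (hFb : Bornology.IsBounded F) : 0 ≤ chebRad V F :=
  le_chebRad hVne fun v _ => chebR_nonneg hFne hFb v

end Aux

/-- if `(X, B_Y, CB(X))` has property-(P₁) then so does `(X, Y, CB(X))`. -/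
theorem stmt_5 {X : Type*} [NormedAddCommGroup X] [NormedSpace ℝ X] [CompleteSpace X]
    (Y : Submodule ℝ X) (hYc : IsClosed (Y : Set X))
    (hP1 : ∀ F : Set X, F.Nonempty → IsClosed F → Bornology.IsBounded F →
      propP1 ((Y : Set X) ∩ closedBall 0 1) F) :
    ∀ F : Set X, F.Nonempty → IsClosed F → Bornology.IsBounded F →
      propP1 (Y : Set X) F := by
  intro F hFne hFcl hFb
  obtain ⟨b0, hb0⟩ := hFne
  have hFne : F.Nonempty := ⟨b0, hb0⟩
  have hYne : (Y : Set X).Nonempty := ⟨0, Y.zero_mem⟩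
  set R : ℝ := chebRad (Y : Set X) F with hR
  have hR0 : 0 ≤ R := chebRad_nonneg hYne hFne hFb
  set M : ℝ := R + 1 + ‖b0‖ with hM
  have hM1 : (1 : ℝ) ≤ M := by rw [hM]; have h := norm_nonneg b0; linarith
  have hMpos : (0 : ℝ) < M := lt_of_lt_of_le one_pos hM1
  set c : ℝ := M⁻¹ with hc
  have hcpos : (0 : ℝ) < c := inv_pos.mpr hMpos
  have hMc : M * c = 1 := mul_inv_cancel₀ hMpos.ne'
  have hcM : c * M = 1 := inv_mul_cancel₀ hMpos.ne'
  set F' : Set X := c • F with hF'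
  have hF'ne : F'.Nonempty := hFne.smul_set
  have hF'cl : IsClosed F' := hFcl.smul_of_ne_zero hcpos.ne'
  have hF'b : Bornology.IsBounded F' := hFb.smul₀ c
  set V' : Set X := (Y : Set X) ∩ closedBall 0 1 with hV'
  have hV'ne : V'.Nonempty := ⟨0, Y.zero_mem, by simp⟩
  -- norm bound on near minimizers
  have hbound : ∀ v ∈ (Y : Set X), chebR v F ≤ R + 1 → ‖v‖ ≤ M := by
    intro v _ hv
    have h1 : ‖v‖ - ‖b0‖ ≤ ‖v - b0‖ := norm_sub_norm_le _ _
    have h2 : ‖v - b0‖ ≤ chebR v F := norm_sub_le_chebR hFb hb0 v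
    rw [hM]; linarith
  -- scaling correspondence
  have hsmulV' : ∀ v ∈ (Y : Set X), ‖v‖ ≤ M → c • v ∈ V' := by
    intro v hv hvn
    refine ⟨Y.smul_mem c hv, ?_⟩
    rw [mem_closedBall, dist_zero_right, norm_smul, Real.norm_eq_abs, abs_of_pos hcpos]
    calc c * ‖v‖ ≤ c * M := by nlinarith
      _ = 1 := hcM
  have hchebR_c : ∀ v : X, chebR (c • v) F' = c * chebR v F := fun v =>
    chebR_smul hFne hFb hcpos v
  have hchebR_M : ∀ w : X, chebR (M • w) F = M * chebR w F' := by
    intro w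
    have : chebR (c • (M • w)) F' = c * chebR (M • w) F := hchebR_c _
    rw [smul_smul, hcM, one_smul] at this
    have := this.symm
    field_simp [hc] at this ⊢
    linarith [this, show chebR (M • w) F = M * chebR w F' by rw [← this, ← mul_assoc, hMc, one_mul]]
  -- the radius equality
  have hrad : chebRad V' F' = c * R := by
    refine le_antisymm ?_ ?_
    · refine _root_.le_of_forall_pos_le_add fun η hη => ?_
      have hlt : chebRad (Y : Set X) F < R + min 1 (M * η) := by
        have : 0 < min 1 (M * η) := lt_min one_pos (by positivity)
        rw [← hR]; linarith
      have : Nonempty (Y : Set X) := hYne.to_subtype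
      obtain ⟨⟨v, hv⟩, hvlt⟩ := exists_lt_of_ciInf_lt hlt
      have hv1 : chebR v F ≤ R + 1 := le_trans hvlt.le (by
        have := min_le_left 1 (M * η); linarith)
      have hvM : ‖v‖ ≤ M := hbound v hv hv1
      have hcv : c • v ∈ V' := hsmulV' v hv hvM
      calc chebRad V' F' ≤ chebR (c • v) F' := chebRad_le hF'ne hF'b hcv
        _ = c * chebR v F := hchebR_c v
        _ ≤ c * (R + min 1 (M * η)) := by
            apply mul_le_mul_of_nonneg_left hvlt.le hcpos.le
        _ ≤ c * (R + M * η) := by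
            have := min_le_right 1 (M * η)
            nlinarith
        _ = c * R + (c * M) * η := by ring
        _ = c * R + η := by rw [hcM, one_mul]
    · refine le_chebRad hV'ne fun w hw => ?_
      have hMw : M • w ∈ (Y : Set X) := by
        have : w ∈ (Y : Set X) := hw.1
        exact Y.smul_mem M this
      have h1 : R ≤ chebR (M • w) F := chebRad_le hFne hFb hMw
      have h2 : chebR (M • w) F = M * chebR w F' := hchebR_M w
      rw [h2] at h1
      calc c * R ≤ c * (M * chebR w F') := mul_le_mul_of_nonneg_left h1 hcpos.le
        _ = (c * M) * chebR w F' := by ring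
        _ = chebR w F' := by rw [hcM, one_mul]
  -- center correspondences
  have hfwd : ∀ {δ : ℝ}, 0 ≤ δ → δ ≤ 1 → ∀ v ∈ chebCentA (Y : Set X) F δ,
      c • v ∈ chebCentA V' F' (c * δ) := by
    intro δ hδ0 hδ1 v hv
    obtain ⟨hvY, hvr⟩ := hv
    have hv1 : chebR v F ≤ R + 1 := le_trans hvr (by rw [← hR]; linarith)
    have hvM : ‖v‖ ≤ M := hbound v hvY hv1
    refine ⟨hsmulV' v hvY hvM, ?_⟩
    rw [hchebR_c, hrad]
    calc c * chebR v F ≤ c * (R + δ) := by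
          apply mul_le_mul_of_nonneg_left _ hcpos.le
          rw [← hR] at hvr; exact hvr
      _ = c * R + c * δ := by ring
  have hbwd : ∀ w ∈ chebCent V' F', M • w ∈ chebCent (Y : Set X) F := by
    intro w hw
    obtain ⟨hwV', hwr⟩ := hw
    refine ⟨Y.smul_mem M hwV'.1, ?_⟩
    rw [hchebR_M, ← hR]
    rw [hrad] at hwr
    calc M * chebR w F' ≤ M * (c * R) := mul_le_mul_of_nonneg_left hwr hMpos.le
      _ = (M * c) * R := by ring
      _ = R := by rw [hMc, one_mul]
  obtain ⟨hP1ne, hP1eps⟩ := hP1 F' hF'ne hF'cl hF'b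
  constructor
  · obtain ⟨w, hw⟩ := hP1ne
    exact ⟨M • w, hbwd w hw⟩
  · intro ε hε
    obtain ⟨δ', hδ'pos, hδ'⟩ := hP1eps (c * ε) (by positivity)
    refine ⟨min 1 (M * δ'), lt_min one_pos (by positivity), ?_⟩
    intro v hv
    have hδ0 : (0 : ℝ) ≤ min 1 (M * δ') := le_of_lt (lt_min one_pos (by positivity))
    have hδ1 : min 1 (M * δ') ≤ 1 := min_le_left _ _
    have hcv : c • v ∈ chebCentA V' F' (c * min 1 (M * δ')) := hfwd hδ0 hδ1 v hv
    have hcv' : c • v ∈ chebCentA V' F' δ' := by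
      obtain ⟨h1, h2⟩ := hcv
      refine ⟨h1, le_trans h2 ?_⟩
      have : c * min 1 (M * δ') ≤ c * (M * δ') :=
        mul_le_mul_of_nonneg_left (min_le_right _ _) hcpos.le
      have h3 : c * (M * δ') = δ' := by rw [← mul_assoc, hcM, one_mul]
      linarith
    have := hδ' hcv'
    rw [Set.mem_add] at this
    obtain ⟨a, ha, u, hu, hau⟩ := this
    rw [Set.mem_smul_set] at hu
    obtain ⟨z, hz, rfl⟩ := hu
    rw [Set.mem_add]
    refine ⟨M • a, hbwd a ha, ε • z, ?_, ?_⟩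
    · exact Set.smul_mem_smul_set hz
    · have : M • (c • v) = v := by rw [smul_smul, hMc, one_smul]
      calc M • a + ε • z = M • a + M • ((c * ε) • z) := by
            rw [smul_smul, ← mul_assoc, hMc, one_mul]
        _ = M • (a + (c * ε) • z) := by rw [smul_add]
        _ = M • (c • v) := by rw [hau]
        _ = v := this
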